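/- arXiv:1507.01432 — 5 statements merged into one kernel-verified Lean document; each statement's English description precedes it below -/
import Mathlib

section
/- Let w be an involution in the symmetric group S_n (i.e. w ∘ w = 1). Then the number of inversions of w (pairs i < j with w(i) > w(j)) has the same parity as the number of excedances of w (indices i with w(i) > i). Consequently the θ-length ℓ_θ(w) := (inv(w) + exc(w))/2 is a well-defined natural number. -/
/-- Number of inversions of a permutation of `Fin n`: pairs `i < j` with `w i > w j`. -/
def invNum {n : ℕ} (w : Equiv.Perm (Fin n)) : ℕ :=
  (Finset.univ.filter fun p : Fin n × Fin n => p.1 < p.2 ∧ w p.2 < w p.1).card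

/-- Number of excedances of a permutation of `Fin n`: indices `i` with `w i > i`. -/
def excNum {n : ℕ} (w : Equiv.Perm (Fin n)) : ℕ :=
  (Finset.univ.filter fun i : Fin n => i < w i).card

/-- The θ-length of an involution: `(inv w + exc w) / 2`. -/
def thetaLength {n : ℕ} (w : Equiv.Perm (Fin n)) : ℕ := (invNum w + excNum w) / 2

theorem invNum_modEq_excNum {n : ℕ} (w : Equiv.Perm (Fin n)) (hw : w * w = 1) :
    invNum w ≡ excNum w [MOD 2] := by
  have hww : ∀ a, w (w a) = a := fun a => by
    have : (w * w) a = (1 : Equiv.Perm (Fin n)) a := by rw [hw]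
    simpa using this
  set α := {p : Fin n × Fin n // p.1 < p.2 ∧ w p.2 < w p.1} with hα
  haveI : Fact (Nat.Prime 2) := ⟨Nat.prime_two⟩
  let f : Function.End α := fun x => ⟨(w x.1.2, w x.1.1), x.2.2, by
    simp only [hww]; exact x.2.1⟩
  have hf2 : f ^ 2 ^ 1 = 1 := by
    funext x
    show f (f x) = x
    apply Subtype.ext
    simp only [f, hww]
  have hmod := Equiv.Perm.card_fixedPoints_modEq (α := α) (f := f) hf2
  have hcardα : Fintype.card α = invNum w := by
    rw [Fintype.card_subtype, invNum]
  -- fixed points of f ≃ excedances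
  have hfix : Fintype.card f.fixedPoints = excNum w := by
    have e : f.fixedPoints ≃ {i : Fin n // i < w i} :=
      { toFun := fun x => ⟨x.1.1.1, by
          have h := congrArg Subtype.val x.2
          have h2 : w x.1.1.2 = x.1.1.1 := congrArg Prod.fst h
          have := x.1.2.2
          rw [h2] at this
          have h3 : x.1.1.2 = w x.1.1.1 := by rw [← hww x.1.1.2, h2]
          rw [← h3]; exact x.1.2.1⟩
        invFun := fun i => ⟨⟨(i.1, w i.1), i.2, by rw [hww]; exact i.2⟩, by
          apply Subtype.ext
          show ((w (w i.1), w i.1) : Fin n × Fin n) = (i.1, w i.1)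
          rw [hww]⟩
        left_inv := fun x => by
          apply Subtype.ext; apply Subtype.ext
          have h := congrArg Subtype.val x.2
          have h2 : w x.1.1.2 = x.1.1.1 := congrArg Prod.fst h
          have h3 : x.1.1.2 = w x.1.1.1 := by rw [← hww x.1.1.2, h2]
          exact Prod.ext rfl h3.symm
        right_inv := fun i => rfl }
    rw [Fintype.card_congr e, Fintype.card_subtype, excNum]
  rwa [hcardα, hfix] at hmod

/-- For an involution `w` of `S_n`, the number of inversions has the same parity as the
number of excedances; consequently `ℓ_θ(w) = (inv w + exc w)/2` is a well-defined natural
number, i.e. `2 * ℓ_θ(w) = inv w + exc w`. -/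
theorem invNum_parity_eq_excNum_parity {n : ℕ} (w : Equiv.Perm (Fin n)) (hw : w * w = 1) :
    invNum w % 2 = excNum w % 2 ∧ 2 * thetaLength w = invNum w + excNum w := by
  have h := invNum_modEq_excNum w hw
  unfold Nat.ModEq at h
  refine ⟨h, ?_⟩
  unfold thetaLength
  omega
end

section
/- Every involution w in S_n can be written as w = τ⁻¹ σ_X τ, where X ⊆ {1,…,n−1} contains no two consecutive integers, σ_X is the product of the transpositions (i,i+1) for i ∈ X, τ ∈ S_n, and the lengths add: inv(w) = 2·inv(τ) + |X|. -/
/-- `X` contains no two consecutive indices. -/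
def NoConsec {n : ℕ} (X : Finset (Fin n)) : Prop :=
  ∀ i ∈ X, ∀ j ∈ X, (j : ℕ) ≠ (i : ℕ) + 1

/-- `σ` is the product `σ_X` of the adjacent transpositions `(i, i+1)` for `i ∈ X`. -/
def IsSigmaX {n : ℕ} (X : Finset (Fin n)) (σ : Equiv.Perm (Fin n)) : Prop :=
  (∀ i ∈ X, ((σ i : ℕ) = (i : ℕ) + 1 ∧ σ (σ i) = i)) ∧
  (∀ j : Fin n, (∀ i ∈ X, j ≠ i ∧ (j : ℕ) ≠ (i : ℕ) + 1) → σ j = j)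

/-!
Induction on `invNum w`. If `w` has a descent at `a` (that is, `w (a+1) < w a`) with
`w a ≠ a + 1`, then conjugating by `s = (a, a+1)` removes exactly two inversions. The
decomposition `s w s = τ⁻¹ σ_X τ` then gives `w = (τ s)⁻¹ σ_X (τ s)`, and subadditivity of
`invNum` forces `invNum (τ s) = invNum τ + 1`. Otherwise every descent `a` of `w` has
`w a = a + 1`, which forces `|w a - a| ≤ 1` everywhere, so `w` is itself some `σ_X` and `τ = 1`.
-/

open Equiv Finset

section

variable {n : ℕ}

def invSet (w : Perm (Fin n)) : Finset (Fin n × Fin n) :=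
  univ.filter fun p => p.1 < p.2 ∧ w p.2 < w p.1

theorem invNum_eq_card_invSet (w : Perm (Fin n)) : invNum w = #(invSet w) := rfl

@[simp]
theorem mem_invSet {w : Perm (Fin n)} {p : Fin n × Fin n} :
    p ∈ invSet w ↔ p.1 < p.2 ∧ w p.2 < w p.1 := by
  simp [invSet]

theorem invNum_one : invNum (1 : Perm (Fin n)) = 0 := by
  simp only [invNum_eq_card_invSet, card_eq_zero, eq_empty_iff_forall_notMem, mem_invSet,
    Perm.one_apply]
  exact fun p h => lt_asymm h.1 h.2

theorem invSet_inv (w : Perm (Fin n)) :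
    invSet w⁻¹ = (invSet w).map ((prodCongr w w).trans (prodComm _ _)).toEmbedding := by
  ext ⟨p, q⟩
  rw [mem_map_equiv]
  simp [and_comm]

theorem invNum_inv (w : Perm (Fin n)) : invNum w⁻¹ = invNum w := by
  rw [invNum_eq_card_invSet, invSet_inv, card_map, invNum_eq_card_invSet]

theorem invSet_mul_subset (u v : Perm (Fin n)) :
    invSet (u * v) ⊆ invSet v ∪ (invSet u).map (prodCongr v v).symm.toEmbedding := by
  rintro ⟨p, q⟩ h
  simp only [mem_invSet, Perm.mul_apply] at h
  simp only [mem_union, mem_map_equiv, Equiv.symm_symm, prodCongr_apply, Prod.map,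
    mem_invSet]
  rcases lt_or_gt_of_ne (v.injective.ne h.1.ne) with hv | hv
  · exact Or.inr ⟨hv, h.2⟩
  · exact Or.inl ⟨h.1, hv⟩

theorem invNum_mul_le (u v : Perm (Fin n)) : invNum (u * v) ≤ invNum u + invNum v := by
  simp only [invNum_eq_card_invSet]
  calc #(invSet (u * v)) ≤ #(invSet v ∪ (invSet u).map (prodCongr v v).symm.toEmbedding) :=
        card_le_card (invSet_mul_subset u v)
    _ ≤ #(invSet u) + #(invSet v) := by
        rw [add_comm]; exact (card_union_le _ _).trans_eq (by rw [card_map])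

theorem invNum_conj_le (σ τ : Perm (Fin n)) :
    invNum (τ⁻¹ * σ * τ) ≤ 2 * invNum τ + invNum σ := by
  have h₁ := invNum_mul_le (τ⁻¹ * σ) τ
  have h₂ := invNum_mul_le τ⁻¹ σ
  rw [invNum_inv] at h₂
  omega

theorem swap_lt_swap_iff {a b p q : Fin n} (hab : (a : ℕ) + 1 = b)
    (h₁ : ¬(p = a ∧ q = b)) (h₂ : ¬(p = b ∧ q = a)) : swap a b p < swap a b q ↔ p < q := by
  simp only [swap_apply_def, Fin.lt_def, Fin.ext_iff] at *
  split_ifs <;> omega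

theorem invSet_mul_swap {w : Perm (Fin n)} {a b : Fin n} (hab : (a : ℕ) + 1 = b)
    (h : w a < w b) :
    invSet (w * swap a b) =
      insert (a, b) ((invSet w).map (prodCongr (swap a b) (swap a b)).toEmbedding) := by
  have hlt : a < b := Fin.lt_def.mpr (by omega)
  ext ⟨p, q⟩
  rw [mem_insert, mem_map_equiv]
  simp only [prodCongr_symm, symm_swap, prodCongr_apply, Prod.map, mem_invSet, Perm.mul_apply,
    Prod.mk.injEq]
  by_cases h₁ : p = a ∧ q = b
  · obtain ⟨rfl, rfl⟩ := h₁
    simpa using ⟨hlt, h⟩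
  by_cases h₂ : p = b ∧ q = a
  · obtain ⟨rfl, rfl⟩ := h₂
    simp [hlt.not_gt, h.not_gt, hlt.ne']
  rw [swap_lt_swap_iff hab h₁ h₂]
  simp [h₁]

theorem invNum_mul_swap_of_lt {w : Perm (Fin n)} {a b : Fin n} (hab : (a : ℕ) + 1 = b)
    (h : w a < w b) : invNum (w * swap a b) = invNum w + 1 := by
  have hba : ¬b < a := by rw [Fin.lt_def]; omega
  rw [invNum_eq_card_invSet, invSet_mul_swap hab h, card_insert_of_notMem, card_map,
    invNum_eq_card_invSet]
  simp [mem_map_equiv, hba]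

theorem invNum_mul_swap_of_gt {w : Perm (Fin n)} {a b : Fin n} (hab : (a : ℕ) + 1 = b)
    (h : w b < w a) : invNum (w * swap a b) + 1 = invNum w := by
  have h' : (w * swap a b) a < (w * swap a b) b := by simpa using h
  simpa [mul_assoc] using (invNum_mul_swap_of_lt hab h').symm

theorem invNum_swap {a b : Fin n} (hab : (a : ℕ) + 1 = b) : invNum (swap a b) = 1 := by
  have hlt : (1 : Perm (Fin n)) a < (1 : Perm (Fin n)) b := by
    rw [Perm.one_apply, Perm.one_apply, Fin.lt_def]
    omega
  simpa [invNum_one] using invNum_mul_swap_of_lt hab hlt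

theorem invNum_mul_swap_le (w : Perm (Fin n)) {a b : Fin n} (hab : (a : ℕ) + 1 = b) :
    invNum (w * swap a b) ≤ invNum w + 1 :=
  (invNum_mul_le _ _).trans_eq (by rw [invNum_swap hab])

theorem invNum_swap_conj_add_two {w : Perm (Fin n)} (hw : w * w = 1) {a b : Fin n}
    (hab : (a : ℕ) + 1 = b) (hdesc : w b < w a) (hne : w a ≠ b) :
    invNum (swap a b * w * swap a b) + 2 = invNum w := by
  have hrefl : ¬(w b = b ∧ w a = a) := by
    rintro ⟨hb, ha⟩
    rw [hb, ha, Fin.lt_def] at hdesc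
    omega
  have hdesc' : (swap a b * w) b < (swap a b * w) a := by
    simpa [swap_lt_swap_iff hab (fun h => hne h.2) hrefl] using hdesc
  have hinv : (w * swap a b)⁻¹ = swap a b * w := by
    rw [mul_inv_rev, swap_inv, inv_eq_of_mul_eq_one_right hw]
  have h₁ := invNum_mul_swap_of_gt hab hdesc
  have h₂ := invNum_mul_swap_of_gt hab hdesc'
  have h₃ : invNum (swap a b * w) = invNum (w * swap a b) := by rw [← hinv, invNum_inv]
  omega

theorem IsSigmaX.apply_cases {X : Finset (Fin n)} {σ : Perm (Fin n)} (h : IsSigmaX X σ)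
    (j : Fin n) :
    (σ j : ℕ) = j ∨ (j ∈ X ∧ (σ j : ℕ) = j + 1) ∨ (σ j ∈ X ∧ (σ j : ℕ) + 1 = j) := by
  by_cases hj : ∀ i ∈ X, j ≠ i ∧ (j : ℕ) ≠ i + 1
  · exact Or.inl (congrArg Fin.val (h.2 j hj))
  push Not at hj
  obtain ⟨i, hi, hji⟩ := hj
  by_cases hij : j = i
  · exact Or.inr (Or.inl (hij ▸ ⟨hi, (h.1 i hi).1⟩))
  · have hσi : σ i = j := Fin.ext ((h.1 i hi).1.trans (hji hij).symm)
    refine Or.inr (Or.inr ?_)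
    rw [← hσi, (h.1 i hi).2, hσi]
    exact ⟨hi, (hji hij).symm⟩

theorem IsSigmaX.invSet_eq {X : Finset (Fin n)} {σ : Perm (Fin n)} (h : IsSigmaX X σ) :
    invSet σ = X.image fun i => (i, σ i) := by
  ext ⟨p, q⟩
  simp only [mem_invSet, mem_image, Prod.mk.injEq]
  constructor
  · rintro ⟨hpq, hσ⟩
    rw [Fin.lt_def] at hpq hσ
    rcases h.apply_cases p with hp | ⟨hpX, hp⟩ | ⟨-, hp⟩ <;>
      rcases h.apply_cases q with hq | ⟨-, hq⟩ | ⟨-, hq⟩ <;>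
      try omega
    all_goals exact ⟨p, hpX, rfl, Fin.ext (by omega)⟩
  · rintro ⟨i, hi, rfl, rfl⟩
    obtain ⟨hσi, hσσi⟩ := h.1 i hi
    simp only [hσσi, Fin.lt_def]
    omega

theorem IsSigmaX.invNum_eq {X : Finset (Fin n)} {σ : Perm (Fin n)} (h : IsSigmaX X σ) :
    invNum σ = #X := by
  rw [invNum_eq_card_invSet, h.invSet_eq,
    card_image_of_injective _ fun i j hij => congrArg Prod.fst hij]

theorem val_apply_le_succ_of_forall_descent {w : Perm (Fin n)}
    (h : ∀ a b : Fin n, (a : ℕ) + 1 = b → w b < w a → (w a : ℕ) = b) (a : Fin n) :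
    (w a : ℕ) ≤ a + 1 := by
  induction a using WellFoundedGT.induction with
  | _ a ih =>
    by_cases ha : (a : ℕ) + 1 < n
    · set b : Fin n := ⟨a + 1, ha⟩
      have hba : b ≠ a := fun hb => by simp [b, Fin.ext_iff] at hb
      rcases lt_or_gt_of_ne (w.injective.ne hba) with hdesc | hasc
      · exact (h a b rfl hdesc).le
      · have := ih b (Fin.lt_def.mpr (by simp [b]))
        rw [Fin.lt_def] at hasc
        simp only [b] at this hasc
        omega
    · have := (w a).isLt
      omega

theorem exists_isSigmaX_of_val_apply_le_succ {w : Perm (Fin n)} (hw : w * w = 1)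
    (hle : ∀ a, (w a : ℕ) ≤ a + 1) : ∃ X, NoConsec X ∧ IsSigmaX X w := by
  have hinvol (x : Fin n) : w (w x) = x := by rw [← Perm.mul_apply, hw, Perm.one_apply]
  have hge (a : Fin n) : (a : ℕ) ≤ w a + 1 := by simpa [hinvol] using hle (w a)
  set X := univ.filter fun i => (w i : ℕ) = i + 1
  have hX (i : Fin n) : i ∈ X ↔ (w i : ℕ) = i + 1 := by simp [X]
  refine ⟨X, ?_, ?_, ?_⟩ <;> simp only [NoConsec, hX]
  · intro i hi j hj hji
    have hwi : w i = j := Fin.ext (hi.trans hji.symm)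
    have := hinvol i
    rw [hwi, Fin.ext_iff] at this
    omega
  · exact fun i hi => ⟨hi, hinvol i⟩
  · intro j hj
    rcases lt_trichotomy (w j : ℕ) j with hlt | heq | hgt
    · have := hge j
      have := (hj (w j) (by rw [hinvol]; omega)).2
      omega
    · exact Fin.ext heq
    · exact absurd rfl (hj j (by have := hle j; omega)).1

end

/-- Every involution `w` of `S_n` can be written as `w = τ⁻¹ σ_X τ` with `X` a set of
indices containing no two consecutive integers, `σ_X` the product of the adjacent
transpositions `(i, i+1)` for `i ∈ X`, and the lengths adding up:
`inv(w) = 2·inv(τ) + |X|`. -/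
theorem involution_conjugate_sigmaX {n : ℕ} (w : Equiv.Perm (Fin n)) (hw : w * w = 1) :
    ∃ (X : Finset (Fin n)) (σ τ : Equiv.Perm (Fin n)),
      NoConsec X ∧ IsSigmaX X σ ∧ w = τ⁻¹ * σ * τ ∧
      invNum w = 2 * invNum τ + X.card := by
  induction hk : invNum w using Nat.strong_induction_on generalizing w with
  | _ k ih =>
    by_cases hdesc : ∃ a b : Fin n, (a : ℕ) + 1 = b ∧ w b < w a ∧ (w a : ℕ) ≠ b
    · obtain ⟨a, b, hab, hlt, hne⟩ := hdesc
      have hlen := invNum_swap_conj_add_two hw hab hlt (fun h => hne (congrArg Fin.val h))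
      have hw' : swap a b * w * swap a b * (swap a b * w * swap a b) = 1 := by
        simp [mul_assoc, ← mul_assoc w, hw]
      obtain ⟨X, σ, τ, hX, hσ, hconj, hlen'⟩ := ih _ (by omega) _ hw' rfl
      have hconj' : w = (τ * swap a b)⁻¹ * σ * (τ * swap a b) :=
        calc w = swap a b * (swap a b * w * swap a b) * swap a b := by simp [mul_assoc]
          _ = _ := by rw [hconj, mul_inv_rev, swap_inv]; group
      have hle := invNum_conj_le σ (τ * swap a b)
      have hτs := invNum_mul_swap_le τ hab
      rw [← hconj', hσ.invNum_eq] at hle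
      exact ⟨X, σ, τ * swap a b, hX, hσ, hconj', by omega⟩
    · push Not at hdesc
      obtain ⟨X, hX, hσ⟩ := exists_isSigmaX_of_val_apply_le_succ hw
        (val_apply_le_succ_of_forall_descent hdesc)
      exact ⟨X, w, 1, hX, hσ, by simp, by simp [← hk, hσ.invNum_eq, invNum_one]⟩
end

section
/- Let w be an involution of S_n written as w = τ⁻¹ σ_X τ with X ⊆ {1,…,n−1} containing no two consecutive integers, σ_X the product of the adjacent transpositions (i,i+1) for i ∈ X, and inv(w) = 2·inv(τ) + |X|. Then the θ-length of w is ℓ_θ(w) = inv(τ) + |X|. -/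
/-- If an involution `w` of `S_n` is written as `w = τ⁻¹ σ_X τ` with `X` containing no
two consecutive integers and the lengths adding (`inv w = 2·inv τ + |X|`), then its
θ-length is `ℓ_θ(w) = inv(τ) + |X|`. -/
theorem thetaLength_of_factorization {n : ℕ} (w σ τ : Equiv.Perm (Fin n))
    (X : Finset (Fin n)) (hw : w * w = 1) (hX : NoConsec X) (hσ : IsSigmaX X σ)
    (hfac : w = τ⁻¹ * σ * τ) (hlen : invNum w = 2 * invNum τ + X.card) :
    thetaLength w = invNum τ + X.card := by
  classical
  have hpt : ∀ i, w (w i) = i := by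
    intro i
    have h : (w * w) i = (1 : Equiv.Perm (Fin n)) i := by rw [hw]
    simpa using h
  obtain ⟨hσ1, hσ2⟩ := hσ
  -- support of σ is X ∪ σ '' X
  have hsuppσ : σ.support = X ∪ X.image σ := by
    ext j
    simp only [Equiv.Perm.mem_support, Finset.mem_union, Finset.mem_image]
    constructor
    · intro hj
      by_contra hcon
      push_neg at hcon
      obtain ⟨hjX, hjI⟩ := hcon
      apply hj
      apply hσ2
      intro i hi
      refine ⟨?_, ?_⟩
      · intro h; exact hjX (h ▸ hi)
      · intro h
        have : j = σ i := by
          have := (hσ1 i hi).1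
          exact Fin.ext (by omega)
        exact hjI i hi this.symm
    · rintro (hj | ⟨i, hi, rfl⟩)
      · have := (hσ1 j hj).1
        intro h; rw [h] at this; omega
      · have h1 := (hσ1 i hi).1
        have h2 := (hσ1 i hi).2
        intro h; rw [h] at h2
        -- then σ i = i via h? h : σ (σ i) = σ i, injectivity gives σ i = i
        have : σ i = i := h2
        rw [this] at h1; omega
  have hdisj : Disjoint X (X.image σ) := by
    rw [Finset.disjoint_right]
    intro j hjim hjX
    simp only [Finset.mem_image] at hjim
    obtain ⟨i, hi, rfl⟩ := hjim
    exact hX i hi (σ i) hjX (hσ1 i hi).1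
  have hcardσ : σ.support.card = 2 * X.card := by
    rw [hsuppσ, Finset.card_union_of_disjoint hdisj,
      Finset.card_image_of_injective _ σ.injective]
    ring
  have hcardw : w.support.card = 2 * X.card := by
    have : w = τ⁻¹ * σ * (τ⁻¹)⁻¹ := by simpa using hfac
    rw [this, Equiv.Perm.card_support_conj, hcardσ]
  -- excedances
  have hAB : (Finset.univ.filter fun i : Fin n => i < w i).card =
      (Finset.univ.filter fun i : Fin n => w i < i).card := by
    apply Finset.card_bij (fun i _ => w i)
    · intro i hi
      simp only [Finset.mem_filter, Finset.mem_univ, true_and] at hi ⊢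
      rw [hpt]; exact hi
    · intro a _ b _ h
      exact w.injective h
    · intro j hj
      simp only [Finset.mem_filter, Finset.mem_univ, true_and] at hj
      refine ⟨w j, ?_, hpt j⟩
      simp only [Finset.mem_filter, Finset.mem_univ, true_and]
      rw [hpt]; exact hj
  have hsplit : w.support.card =
      (Finset.univ.filter fun i : Fin n => i < w i).card +
      (Finset.univ.filter fun i : Fin n => w i < i).card := by
    rw [← Finset.card_union_of_disjoint]
    · congr 1
      ext i
      simp only [Equiv.Perm.mem_support, Finset.mem_union, Finset.mem_filter,
        Finset.mem_univ, true_and]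
      constructor
      · intro h; exact h.symm.lt_or_gt
      · rintro (h | h)
        · exact h.ne'
        · exact h.ne
    · rw [Finset.disjoint_left]
      intro i hi hi'
      simp only [Finset.mem_filter, Finset.mem_univ, true_and] at hi hi'
      exact absurd (hi.trans hi') (lt_irrefl i)
  have hexc : excNum w = X.card := by
    unfold excNum
    omega
  unfold thetaLength
  omega
end

section
/- For any two involutions v ≤ w in the Bruhat order on S_n, one has ℓ_θ(v) ≤ ℓ_θ(w), where ℓ_θ(y) = (inv(y) + exc(y))/2 is the θ-length. In other words, the θ-length is monotone along the Bruhat order restricted to involutions. -/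
/-- The Bruhat order on `S_n`, via the rank-matrix characterization:
`u ≤ v` iff for all `i, j`, `#{a ≤ i : u a ≥ j} ≤ #{a ≤ i : v a ≥ j}`. -/
def bruhatLE {n : ℕ} (u v : Equiv.Perm (Fin n)) : Prop :=
  ∀ i j : Fin n,
    (Finset.univ.filter fun a : Fin n => a ≤ i ∧ j ≤ u a).card ≤
    (Finset.univ.filter fun a : Fin n => a ≤ i ∧ j ≤ v a).card

/-- Strict Bruhat order. -/
def bruhatLT {n : ℕ} (u v : Equiv.Perm (Fin n)) : Prop := bruhatLE u v ∧ u ≠ v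

/-!
Induction on `inv w + exc w`. If `w ≠ 1`, choose an adjacent transposition `s = (a b)`,
`b = a + 1`, with `w b < w a`, and replace `w` by its twisted image `s ⋉ w` (`w s` if `s`
commutes with `w`, `s w s` otherwise): this is again an involution, with `inv + exc` smaller
by exactly `2`. The lifting property of the Bruhat order gives `s ⋉ v ≤ s ⋉ w` when
`v b < v a` and `v ≤ s ⋉ w` otherwise; it is checked on rank matrices, where right
multiplication by `s` only changes row `a + 1`, and inversion, which transposes the rank matrix
up to complementation, turns left multiplication into right multiplication. The induction ends
at `w = 1`, the only permutation below which is `1`.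
-/

open Finset Equiv

namespace BruhatInvolution

theorem card_filter_comp_perm {α : Type*} [Fintype α] (σ : Perm α) (p : α → Prop)
    [DecidablePred p] : #{x | p (σ x)} = #{x | p x} :=
  card_equiv σ (by simp)

theorem card_filter_eq_add_one {α : Type*} [Fintype α] [DecidableEq α] {p q : α → Prop}
    [DecidablePred p] [DecidablePred q] (x₀ : α) (hq : q x₀) (hp : ¬p x₀)
    (h : ∀ x ≠ x₀, p x ↔ q x) : #{x | q x} = #{x | p x} + 1 := by
  rw [← card_insert_of_notMem (s := {x | p x}) (by simpa using hp)]
  congr 1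
  ext x
  by_cases hx : x = x₀
  · simp [hx, hq]
  · simp [hx, h x hx]

variable {n : ℕ} {a b : Fin n}

theorem swap_lt_swap_iff (hab : (b : ℕ) = a + 1) {x y : Fin n} (h₁ : ¬(x = a ∧ y = b))
    (h₂ : ¬(x = b ∧ y = a)) : swap a b x < swap a b y ↔ x < y := by
  simp only [swap_apply_def]
  split_ifs <;> simp only [Fin.lt_def, Fin.ext_iff, not_and] at * <;> omega

theorem swap_lt_swap (hab : (b : ℕ) = a + 1) {x y : Fin n} (hxy : x < y)
    (h : ¬(x = a ∧ y = b)) : swap a b x < swap a b y :=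
  (swap_lt_swap_iff hab h fun h' => by rw [h'.1, h'.2, Fin.lt_def] at hxy; omega).2 hxy

theorem invNum_inv (u : Perm (Fin n)) : invNum u⁻¹ = invNum u := by
  rw [invNum, invNum, ← card_filter_comp_perm ((Equiv.prodComm _ _).trans (prodCongr u u))]
  congr 1
  ext p
  simp [and_comm]

theorem invNum_mul_swap (hab : (b : ℕ) = a + 1) {u : Perm (Fin n)} (hu : u b < u a) :
    invNum (u * swap a b) + 1 = invNum u := by
  have hba : ¬b < a := by rw [Fin.lt_def]; omega
  rw [invNum, ← card_filter_comp_perm (prodCongr (swap a b) (swap a b))]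
  refine (card_filter_eq_add_one (a, b)
    ⟨show a < b by rw [Fin.lt_def]; omega, hu⟩ (by simp [hba]) ?_).symm
  rintro ⟨x, y⟩ hxy
  by_cases hyx : x = b ∧ y = a
  · simp [hyx.1, hyx.2, hba, hu.not_gt]
  · simp [swap_lt_swap_iff hab (fun h => hxy (Prod.ext h.1 h.2)) hyx]

theorem invNum_swap_mul (hab : (b : ℕ) = a + 1) {u : Perm (Fin n)} (hu : u⁻¹ b < u⁻¹ a) :
    invNum (swap a b * u) + 1 = invNum u := by
  rw [← invNum_inv, mul_inv_rev, swap_inv, ← invNum_inv u]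
  exact invNum_mul_swap hab hu

theorem excNum_mul_swap (hab : (b : ℕ) = a + 1) {u : Perm (Fin n)} (ha : u a = b)
    (hb : u b = a) : excNum (u * swap a b) + 1 = excNum u := by
  have hba : ¬b < a := by rw [Fin.lt_def]; omega
  rw [excNum, ← card_filter_comp_perm (swap a b)]
  refine (card_filter_eq_add_one a (by rw [ha, Fin.lt_def]; omega) (by simp [ha]) ?_).symm
  intro x hxa
  by_cases hxb : x = b
  · simp [hxb, hb, hba]
  · simp [swap_apply_of_ne_of_ne hxa hxb]

theorem excNum_swap_mul_swap (hab : (b : ℕ) = a + 1) {u : Perm (Fin n)} (ha : u a ≠ b)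
    (hb : u b ≠ a) : excNum (swap a b * u * swap a b) = excNum u := by
  rw [excNum, ← card_filter_comp_perm (swap a b)]
  congr 1
  ext x
  simpa using swap_lt_swap_iff hab (x := x) (y := u x) (by grind) (by grind)

/-- The bounds are natural numbers, so that `rankNum u i j` makes sense for all `i j`;
`bruhatLE u v` compares `rankNum u (i + 1) j` with `rankNum v (i + 1) j` for `i j : Fin n`. -/
def rankNum (u : Perm (Fin n)) (i j : ℕ) : ℕ := #{x : Fin n | (x : ℕ) < i ∧ j ≤ (u x : ℕ)}

def RankLE (u v : Perm (Fin n)) : Prop := ∀ i j, rankNum u i j ≤ rankNum v i j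

theorem RankLE.trans {u v w : Perm (Fin n)} (huv : RankLE u v) (hvw : RankLE v w) :
    RankLE u w :=
  fun i j => (huv i j).trans (hvw i j)

theorem rankLE_of_bruhatLE {u v : Perm (Fin n)} (h : bruhatLE u v) : RankLE u v := by
  intro i j
  by_cases hij : i = 0 ∨ n ≤ j
  · have : rankNum u i j = 0 := card_eq_zero.2 (filter_false_of_mem fun x _ hx => by
      have := (u x).isLt
      omega)
    omega
  have key : ∀ w : Perm (Fin n), rankNum w i j =
      #{x | x ≤ (⟨min i n - 1, by omega⟩ : Fin n) ∧ (⟨j, by omega⟩ : Fin n) ≤ w x} := by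
    intro w
    unfold rankNum
    refine congrArg card (filter_congr fun x _ => ?_)
    have := x.isLt
    simp only [Fin.le_def]
    omega
  rw [key, key]
  exact h _ _

theorem rankNum_succ (u : Perm (Fin n)) (x₀ : Fin n) (j : ℕ) :
    rankNum u (x₀ + 1) j = rankNum u x₀ j + if j ≤ (u x₀ : ℕ) then 1 else 0 := by
  have hx : ∀ x ≠ x₀, (x : ℕ) < x₀ ↔ (x : ℕ) < x₀ + 1 := fun x hx => by
    have := Fin.val_ne_of_ne hx
    omega
  unfold rankNum
  split_ifs with hj
  · exact card_filter_eq_add_one x₀ ⟨by omega, hj⟩ (by simp) fun x hxne =>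
      and_congr_left' (hx x hxne)
  · refine congrArg card (filter_congr fun x _ => ?_)
    by_cases hxe : x = x₀
    · subst hxe; simp [hj]
    · rw [hx x hxe]

/-- Count the points `x < i` with `u x < j` in two ways. -/
theorem rankNum_add_card_lt (u : Perm (Fin n)) (i j : ℕ) :
    rankNum u i j + #{y : Fin n | (y : ℕ) < j} =
      rankNum u⁻¹ j i + #{x : Fin n | (x : ℕ) < i} := by
  have split : ∀ (w : Perm (Fin n)) (i j : ℕ), #{x : Fin n | (x : ℕ) < i} =
      rankNum w i j + #{x : Fin n | (x : ℕ) < i ∧ (w x : ℕ) < j} := by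
    intro w i j
    rw [rankNum, ← card_union_of_disjoint (disjoint_filter.2 fun x _ h₁ h₂ => by omega)]
    congr 1
    ext x
    simp only [mem_filter, mem_univ, true_and, mem_union]
    omega
  have hswap : #{x : Fin n | (x : ℕ) < i ∧ (u x : ℕ) < j} =
      #{y : Fin n | (y : ℕ) < j ∧ (u⁻¹ y : ℕ) < i} := by
    refine Eq.trans ?_ (card_filter_comp_perm u _)
    simp [and_comm]
  have := split u i j
  have := split u⁻¹ j i
  omega

theorem RankLE.inv {u v : Perm (Fin n)} (h : RankLE u v) : RankLE u⁻¹ v⁻¹ := fun j i => by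
  have := h i j
  have := rankNum_add_card_lt u i j
  have := rankNum_add_card_lt v i j
  omega

theorem rankNum_mul_swap_of_ne (hab : (b : ℕ) = a + 1) (u : Perm (Fin n)) {i : ℕ}
    (hi : i ≠ a + 1) (j : ℕ) : rankNum (u * swap a b) i j = rankNum u i j := by
  rw [rankNum, rankNum,
    ← card_filter_comp_perm (swap a b) fun x => (x : ℕ) < i ∧ j ≤ (u x : ℕ)]
  refine congrArg card (filter_congr fun x _ => ?_)
  simp only [Perm.mul_apply, and_congr_left_iff]
  intro _
  rw [swap_apply_def]
  split_ifs <;> simp only [Fin.ext_iff] at * <;> omega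

theorem rankNum_mul_swap_succ (hab : (b : ℕ) = a + 1) (u : Perm (Fin n)) (j : ℕ) :
    rankNum (u * swap a b) (a + 1) j = rankNum u a j + if j ≤ (u b : ℕ) then 1 else 0 := by
  rw [rankNum_succ, rankNum_mul_swap_of_ne hab u (by omega), Perm.mul_apply, swap_apply_left]

theorem rankLE_mul_swap (hab : (b : ℕ) = a + 1) {u : Perm (Fin n)} (hu : u b < u a) :
    RankLE (u * swap a b) u := by
  intro i j
  by_cases hi : i = a + 1
  · subst hi
    rw [rankNum_mul_swap_succ hab, rankNum_succ]
    rw [Fin.lt_def] at hu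
    split_ifs <;> omega
  · rw [rankNum_mul_swap_of_ne hab u hi]

theorem rankNum_add_two (hab : (b : ℕ) = a + 1) (u : Perm (Fin n)) (j : ℕ) :
    rankNum u (a + 2) j =
      rankNum u a j + (if j ≤ (u a : ℕ) then 1 else 0) + if j ≤ (u b : ℕ) then 1 else 0 := by
  rw [← rankNum_succ, show (a : ℕ) + 2 = b + 1 by omega, rankNum_succ, hab]

theorem RankLE.mul_swap_of_descent (hab : (b : ℕ) = a + 1) {v w : Perm (Fin n)}
    (h : RankLE v w) (hv : v b < v a) : RankLE (v * swap a b) (w * swap a b) := by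
  intro i j
  by_cases hi : i = a + 1
  · subst hi
    have := h a j
    have := h (a + 2) j
    rw [rankNum_add_two hab, rankNum_add_two hab] at this
    rw [rankNum_mul_swap_succ hab, rankNum_mul_swap_succ hab]
    rw [Fin.lt_def] at hv
    split_ifs at * <;> omega
  · rw [rankNum_mul_swap_of_ne hab v hi, rankNum_mul_swap_of_ne hab w hi]
    exact h i j

theorem RankLE.le_mul_swap_of_ascent (hab : (b : ℕ) = a + 1) {v w : Perm (Fin n)}
    (h : RankLE v w) (hv : v a < v b) : RankLE v (w * swap a b) := by
  intro i j
  by_cases hi : i = a + 1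
  · subst hi
    have := h a j
    have := h (a + 2) j
    rw [rankNum_add_two hab, rankNum_add_two hab] at this
    rw [rankNum_mul_swap_succ hab, rankNum_succ]
    rw [Fin.lt_def] at hv
    split_ifs at * <;> omega
  · rw [rankNum_mul_swap_of_ne hab w hi]
    exact h i j

theorem rankLE_swap_mul (hab : (b : ℕ) = a + 1) {u : Perm (Fin n)} (hu : u⁻¹ b < u⁻¹ a) :
    RankLE (swap a b * u) u := by
  simpa using (rankLE_mul_swap hab hu).inv

theorem RankLE.swap_mul_of_descent (hab : (b : ℕ) = a + 1) {v w : Perm (Fin n)}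
    (h : RankLE v w) (hv : v⁻¹ b < v⁻¹ a) : RankLE (swap a b * v) (swap a b * w) := by
  simpa using (h.inv.mul_swap_of_descent hab hv).inv

theorem RankLE.le_swap_mul_of_ascent (hab : (b : ℕ) = a + 1) {v w : Perm (Fin n)}
    (h : RankLE v w) (hv : v⁻¹ a < v⁻¹ b) : RankLE v (swap a b * w) := by
  simpa using (h.inv.le_mul_swap_of_ascent hab hv).inv

theorem eq_one_of_rankLE_one {v : Perm (Fin n)} (h : RankLE v 1) : v = 1 := by
  have hle : ∀ x, v x ≤ x := fun x => by
    by_contra! hx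
    have hv : 0 < rankNum v (x + 1) (x + 1) :=
      card_pos.2 ⟨x, by simp only [mem_filter, mem_univ, true_and, Fin.lt_def] at hx ⊢; omega⟩
    have h1 : rankNum (1 : Perm (Fin n)) (x + 1) (x + 1) = 0 :=
      card_eq_zero.2 (filter_false_of_mem fun y _ hy => by simp at hy; omega)
    have := h (x + 1) (x + 1)
    omega
  by_contra hv
  obtain ⟨x, hx⟩ : ∃ x, v x ≠ x := by
    by_contra! hfix
    exact hv (Equiv.ext hfix)
  have hlt : ∑ x, (v x : ℕ) < ∑ x : Fin n, (x : ℕ) :=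
    sum_lt_sum (fun x _ => hle x) ⟨x, mem_univ x, (hle x).lt_of_ne hx⟩
  rw [Equiv.sum_comp v (fun x => (x : ℕ))] at hlt
  exact hlt.false

theorem exists_descent {w : Perm (Fin n)} (hw : w ≠ 1) :
    ∃ a b : Fin n, (b : ℕ) = a + 1 ∧ w b < w a := by
  by_contra! h
  cases n with
  | zero => exact hw (Subsingleton.elim _ _)
  | succ m =>
    have hmono : StrictMono w := Fin.strictMono_iff_lt_succ.2 fun i =>
      (h i.castSucc i.succ (by simp)).lt_of_ne (w.injective.ne Fin.castSucc_lt_succ.ne)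
    exact hw (Equiv.ext fun x => hmono.apply_eq)

/-- The twisted action `s ⋉ w` of the adjacent transposition `s = (a b)` on involutions:
`w s` when `s` commutes with `w`, and `s w s` otherwise. -/
def twist (a b : Fin n) (w : Perm (Fin n)) : Perm (Fin n) :=
  if w a = b then w * swap a b else swap a b * w * swap a b

theorem apply_eq_of_apply_eq {w : Perm (Fin n)} (hw : w * w = 1) {x y : Fin n} (h : w x = y) :
    w y = x := by
  rw [← h, ← Perm.mul_apply, hw, Perm.one_apply]

theorem inv_mul_swap_apply_lt (hab : (b : ℕ) = a + 1) {w : Perm (Fin n)} (hw : w * w = 1)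
    (hd : w b < w a) (ha : w a ≠ b) : (w * swap a b)⁻¹ b < (w * swap a b)⁻¹ a := by
  rw [mul_inv_rev, swap_inv, inv_eq_of_mul_eq_one_right hw]
  exact swap_lt_swap hab hd fun h => ha h.2

theorem twist_mul_self {w : Perm (Fin n)} (hw : w * w = 1) :
    twist a b w * twist a b w = 1 := by
  unfold twist
  split_ifs with ha
  · have hcomm : w * swap a b = swap a b * w := by
      rw [mul_swap_eq_swap_mul, ha, apply_eq_of_apply_eq hw ha, swap_comm]
    nth_rewrite 2 [hcomm]
    simp only [mul_assoc, swap_mul_self_mul, hw]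
  · simp only [mul_assoc, swap_mul_self_mul, ← mul_assoc w w, hw, one_mul, swap_mul_self]

theorem invNum_add_excNum_twist (hab : (b : ℕ) = a + 1) {w : Perm (Fin n)} (hw : w * w = 1)
    (hd : w b < w a) :
    invNum (twist a b w) + excNum (twist a b w) + 2 = invNum w + excNum w := by
  have hinv := invNum_mul_swap hab hd
  unfold twist
  split_ifs with ha
  · have := excNum_mul_swap hab ha (apply_eq_of_apply_eq hw ha)
    omega
  · have hb : w b ≠ a := fun hb => ha (apply_eq_of_apply_eq hw hb)
    have := invNum_swap_mul hab (inv_mul_swap_apply_lt hab hw hd ha)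
    rw [← mul_assoc] at this
    rw [excNum_swap_mul_swap hab ha hb]
    omega

theorem RankLE.twist_of_descent (hab : (b : ℕ) = a + 1) {v w : Perm (Fin n)} (h : RankLE v w)
    (hv : v * v = 1) (hdv : v b < v a) : RankLE (twist a b v) (twist a b w) := by
  have hvs : RankLE (v * swap a b) (w * swap a b) := h.mul_swap_of_descent hab hdv
  unfold twist
  by_cases hwa : w a = b
  · rw [if_pos hwa]
    by_cases hva : v a = b
    · rwa [if_pos hva]
    · rw [if_neg hva, mul_assoc]
      exact (rankLE_swap_mul hab (inv_mul_swap_apply_lt hab hv hdv hva)).trans hvs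
  · rw [if_neg hwa, mul_assoc _ w]
    by_cases hva : v a = b
    · rw [if_pos hva]
      refine hvs.le_swap_mul_of_ascent hab ?_
      rw [mul_inv_rev, swap_inv, inv_eq_of_mul_eq_one_right hv, Perm.mul_apply, Perm.mul_apply,
        hva, apply_eq_of_apply_eq hv hva, swap_apply_right, swap_apply_left, Fin.lt_def]
      omega
    · rw [if_neg hva, mul_assoc]
      exact hvs.swap_mul_of_descent hab (inv_mul_swap_apply_lt hab hv hdv hva)

theorem RankLE.le_twist_of_ascent (hab : (b : ℕ) = a + 1) {v w : Perm (Fin n)} (h : RankLE v w)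
    (hv : v * v = 1) (hav : v a < v b) : RankLE v (twist a b w) := by
  have hvs := h.le_mul_swap_of_ascent hab hav
  unfold twist
  split_ifs
  · exact hvs
  · rw [mul_assoc]
    exact hvs.le_swap_mul_of_ascent hab (by rwa [inv_eq_of_mul_eq_one_right hv])

theorem invNum_add_excNum_le {v w : Perm (Fin n)} (hv : v * v = 1) (hw : w * w = 1)
    (h : RankLE v w) : invNum v + excNum v ≤ invNum w + excNum w := by
  induction hm : invNum w + excNum w using Nat.strong_induction_on generalizing v w with
  | _ m ih =>
  subst hm
  by_cases hw1 : w = 1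
  · subst hw1
    rw [eq_one_of_rankLE_one h]
  obtain ⟨a, b, hab, hdw⟩ := exists_descent hw1
  have hw' := invNum_add_excNum_twist hab hw hdw
  rcases (v.injective.ne (Fin.ne_of_val_ne (by omega) : a ≠ b)).lt_or_gt with hav | hdv
  · have := ih _ (by omega) hv (twist_mul_self hw) (h.le_twist_of_ascent hab hv hav) rfl
    omega
  · have := ih _ (by omega) (twist_mul_self hv) (twist_mul_self hw)
      (h.twist_of_descent hab hv hdv) rfl
    have := invNum_add_excNum_twist hab hv hdv
    omega

end BruhatInvolution

/-- The θ-length is monotone along the Bruhat order restricted to involutions: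
if `v ≤ w` in Bruhat order and both are involutions, then `ℓ_θ(v) ≤ ℓ_θ(w)`. -/
theorem thetaLength_monotone_bruhat {n : ℕ} (v w : Equiv.Perm (Fin n))
    (hv : v * v = 1) (hw : w * w = 1) (h : bruhatLE v w) :
    thetaLength v ≤ thetaLength w :=
  Nat.div_le_div_right <|
    BruhatInvolution.invNum_add_excNum_le hv hw (BruhatInvolution.rankLE_of_bruhatLE h)
end

section
/- Every irreducible finite-dimensional continuous complex representation of the real Weil group W_ℝ has dimension 1 or 2; up to equivalence these are the characters W(s,ε) = (Triv or sgn)⊗|·|^s for s ∈ ℂ, ε ∈ {0,1}, and the 2-dimensional representations V(s₁,s₂) with s₂ − s₁ ∈ ℕ positive. Moreover W(s,ε) is unitary iff s ∈ iℝ, and V(s₁,s₂) is unitary iff s₁ + s₂ ∈ iℝ. -/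
/-! ## The real Weil group

We model `W_ℝ` as pairs `(z, b)` with `z ∈ ℂˣ`, `b ∈ Bool`, where `(z, false)`
corresponds to `z ∈ ℂˣ ⊂ W_ℝ` and `(z, true)` to `z·j`; the relations are
`j² = −1` and `j z j⁻¹ = z̄`. -/

/-- Complex conjugation on `ℂˣ`. -/
noncomputable def conjU : ℂˣ →* ℂˣ := Units.map (starRingEnd ℂ).toMonoidHom

@[simp] lemma conjU_conjU (v : ℂˣ) : conjU (conjU v) = v := by
  ext; simp [conjU]

@[simp] lemma conjU_neg_one : conjU (-1) = -1 := by
  ext; simp [conjU]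

@[simp] lemma conjU_neg (u : ℂˣ) : conjU (-u) = -(conjU u) := by
  ext; simp [conjU]

/-- The real Weil group `W_ℝ`: the nonsplit extension of `ℤ/2` by `ℂˣ`, generated by
`ℂˣ` and an element `j` with `j² = −1` and `j z j⁻¹ = z̄`.  The element `⟨z, false⟩` is
`z ∈ ℂˣ` and `⟨z, true⟩` is `z·j`. -/
structure WeilR where
  z : ℂˣ
  j : Bool

namespace WeilR

noncomputable instance : Mul WeilR :=
  ⟨fun g h => ⟨g.z * (if g.j then conjU h.z else h.z) * (if g.j && h.j then -1 else 1),
    xor g.j h.j⟩⟩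

instance : One WeilR := ⟨⟨1, false⟩⟩

lemma mul_def (g h : WeilR) :
    g * h = ⟨g.z * (if g.j then conjU h.z else h.z) * (if g.j && h.j then -1 else 1),
      xor g.j h.j⟩ := rfl

lemma one_def : (1 : WeilR) = ⟨1, false⟩ := rfl

noncomputable instance : Monoid WeilR where
  mul_assoc := by
    rintro ⟨z, a⟩ ⟨w, b⟩ ⟨v, c⟩
    cases a <;> cases b <;> cases c <;>
      simp [mul_def, WeilR.mk.injEq, map_mul, mul_assoc, mul_comm, mul_left_comm]
  one_mul := by rintro ⟨z, b⟩; cases b <;> simp [mul_def, one_def]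
  mul_one := by rintro ⟨z, b⟩; cases b <;> simp [mul_def, one_def]

/-- The topology of `W_ℝ`, induced from `ℂˣ × Bool`. -/
noncomputable instance : TopologicalSpace WeilR :=
  TopologicalSpace.induced (fun g => (g.z, g.j)) inferInstance

end WeilR

/-- The character `χ_{s₁,s₂} : z ↦ z^{s₁} z̄^{s₂} = |z|^{s₁+s₂} (z/|z|)^{s₁−s₂}` of `ℂˣ`,
where the integer `n` is `s₁ − s₂`. -/
noncomputable def chi (s₁ s₂ : ℂ) (n : ℤ) (z : ℂˣ) : ℂ :=
  ((‖(z : ℂ)‖ : ℂ)) ^ (s₁ + s₂) * ((z : ℂ) / (‖(z : ℂ)‖ : ℂ)) ^ n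

/-- The one-dimensional character `W(s, ε) = (Triv or sgn) ⊗ |·|^s` of `W_ℝ`, where
`|·|` is the norm character (`|z| = z z̄`, `|j| = 1`) and `sgn` is the character trivial
on the identity component (`ε = true` means `sgn`). -/
noncomputable def wchar (s : ℂ) (ε : Bool) (g : WeilR) : ℂ :=
  (((‖(g.z : ℂ)‖) ^ 2 : ℝ) : ℂ) ^ s * (if ε then (if g.j then -1 else 1) else 1)

/-- `ρ` is the induced representation `V(s₁,s₂) = Ind_{ℂˣ}^{W_ℝ}(χ_{s₁,s₂})` of `W_ℝ`
on `ℂ²` (with `n = s₁ − s₂ ∈ ℤ`), described by its action on the generators: `z ∈ ℂˣ`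
acts diagonally by `(χ_{s₁,s₂}(z), χ_{s₂,s₁}(z))` and `j` acts by `(v₀,v₁) ↦ ((−1)ⁿ v₁, v₀)`
(note `χ_{s₁,s₂}(−1) = (−1)ⁿ`). -/
def IsIndRep (s₁ s₂ : ℂ) (n : ℤ) (ρ : Representation ℂ WeilR (Fin 2 → ℂ)) : Prop :=
  (∀ (z : ℂˣ) (v : Fin 2 → ℂ),
      ρ ⟨z, false⟩ v = ![chi s₁ s₂ n z * v 0, chi s₂ s₁ (-n) z * v 1]) ∧
  (∀ v : Fin 2 → ℂ, ρ ⟨1, true⟩ v = ![(-1 : ℂ) ^ n * v 1, v 0])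

/-- A representation is irreducible if its only invariant subspaces are `⊥` and `⊤`. -/
def RepIrreducible {G V : Type*} [Monoid G] [AddCommMonoid V] [Module ℂ V]
    (ρ : Representation ℂ G V) : Prop :=
  ∀ U : Submodule ℂ V, (∀ g : G, ∀ v ∈ U, ρ g v ∈ U) → U = ⊥ ∨ U = ⊤

/-- Equivalence of representations: a linear isomorphism intertwining the actions. -/
def RepEquiv {G V W : Type*} [Monoid G] [AddCommMonoid V] [Module ℂ V]
    [AddCommMonoid W] [Module ℂ W]
    (ρ : Representation ℂ G V) (ρ' : Representation ℂ G W) : Prop :=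
  ∃ e : V ≃ₗ[ℂ] W, ∀ (g : G) (v : V), e (ρ g v) = ρ' g (e v)

/-- A representation of `W_ℝ` on `ℂ^d` is unitarizable if it is equivalent to a
representation preserving the standard hermitian inner product. -/
def IsUnitarizable {d : ℕ} (ρ : Representation ℂ WeilR (Fin d → ℂ)) : Prop :=
  ∃ T : (Fin d → ℂ) ≃ₗ[ℂ] EuclideanSpace ℂ (Fin d),
    ∀ (g : WeilR) (v w : Fin d → ℂ),
      (inner ℂ (T (ρ g v)) (T (ρ g w)) : ℂ) = inner ℂ (T v) (T w)

/-!
Restricted to the abelian subgroup `ℂˣ`, an irreducible representation has a common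
eigenvector `v`, and continuity forces its eigencharacter to be `z ↦ |z|^c (z/|z|)^n`.
Because `j z j⁻¹ = z̄`, the vector `j v` is an eigenvector for the character with `-n`, and
`j² = -1` acts on `v` by `(-1)^n`; so the span of `v` and `j v` is invariant, hence everything,
and after swapping `v` with `j v` we may take `n ≤ 0`. If `j v` is proportional to `v`, then `z`
and `z̄` act alike, which forces `n = 0`, and `j` acts by `±1`: a character `W(c/2, ε)`.
Otherwise `(v, j v)` is a basis in which the action is that of `V(s₁, s₂)` with
`s₁ + s₂ = c`, `s₁ - s₂ = n`. Unitarity is read off the modulus of the eigenvalues of `z = 2`;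
conversely, for purely imaginary exponents the generators act by monomial matrices with
unimodular entries.
-/

open Complex ComplexConjugate intervalIntegral Module

lemma eq_mul_exp_of_hasDerivAt {f : ℝ → ℂ} {c : ℂ} (hf : ∀ t, HasDerivAt f (c * f t) t)
    (t : ℝ) : f t = f 0 * exp (c * t) := by
  have hconst : ∀ s, HasDerivAt (fun s : ℝ => f s * exp (-(c * s))) 0 s := fun s => by
    have he : HasDerivAt (fun s : ℝ => exp (-(c * s))) (exp (-(c * s)) * -c) s := by
      simpa using (((hasDerivAt_id s).ofReal_comp.const_mul c).neg).cexp
    have h := (hf s).mul he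
    rwa [show c * f s * exp (-(c * s)) + f s * (exp (-(c * s)) * -c) = 0 by ring] at h
  have h := is_const_of_deriv_eq_zero (fun s => (hconst s).differentiableAt)
    (fun s => (hconst s).deriv) t 0
  simp only [ofReal_zero, mul_zero, neg_zero, exp_zero, mul_one] at h
  rw [← h, mul_assoc, ← exp_add, neg_add_cancel, exp_zero, mul_one]

/-- Integrating `f (t + s) = f t * f s` over `s ∈ [0, a]` writes `f` through its primitive,
so `f` is differentiable with `f' = c f`. -/
lemma exists_eq_exp_mul_of_map_add {f : ℝ → ℂ} (hf : Continuous f) (h0 : f 0 = 1)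
    (hadd : ∀ x y, f (x + y) = f x * f y) : ∃ c : ℂ, ∀ t : ℝ, f t = exp (c * t) := by
  set L : ℝ → ℂ := fun t => ∫ s in (0 : ℝ)..t, f s
  have hL : ∀ t, HasDerivAt L (f t) t := fun t =>
    integral_hasDerivAt_right (hf.intervalIntegrable 0 t)
      (hf.stronglyMeasurableAtFilter _ _) hf.continuousAt
  obtain ⟨a, ha⟩ : ∃ a, L a ≠ 0 := by
    by_contra! h
    have hL0 : HasDerivAt L 0 0 := by
      rw [show L = fun _ => 0 from funext h]
      exact hasDerivAt_const _ _
    exact one_ne_zero (h0 ▸ (hL 0).unique hL0)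
  have hshift : ∀ t, f t = (L (t + a) - L t) / L a := fun t => by
    rw [eq_div_iff ha, integral_interval_sub_left (hf.intervalIntegrable _ _)
      (hf.intervalIntegrable _ _), ← integral_const_mul]
    simp only [← hadd, integral_comp_add_left f t, add_zero]
  have hder : ∀ t, HasDerivAt f ((f a - 1) / L a * f t) t := fun t => by
    have h := (((hL (t + a)).comp_add_const t a).sub (hL t)).div_const (L a)
    rw [hadd t a, show (f t * f a - f t) / L a = (f a - 1) / L a * f t by ring] at h
    exact h.congr_of_eventuallyEq (Filter.Eventually.of_forall hshift)
  exact ⟨(f a - 1) / L a, fun t => by rw [eq_mul_exp_of_hasDerivAt hder t, h0, one_mul]⟩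

/-- Commuting operators preserve each other's eigenspaces, so one can descend to an
eigenspace of any member that is not a scalar. -/
theorem Module.End.exists_common_eigenvector {K V : Type*} [Field K] [IsAlgClosed K]
    [AddCommGroup V] [Module K V] [FiniteDimensional K V] [Nontrivial V]
    (S : Set (Module.End K V)) (hS : ∀ A ∈ S, ∀ B ∈ S, Commute A B) :
    ∃ v : V, v ≠ 0 ∧ ∀ A ∈ S, ∃ μ : K, A v = μ • v := by
  induction hV : finrank K V using Nat.strong_induction_on generalizing V with
  | _ k ih =>
  by_cases hscalar : ∀ A ∈ S, ∃ μ : K, ∀ x, A x = μ • x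
  · obtain ⟨v, hv⟩ := exists_ne (0 : V)
    exact ⟨v, hv, fun A hA => (hscalar A hA).imp fun μ hμ => hμ v⟩
  push Not at hscalar
  obtain ⟨A₀, hA₀, hA₀_nonscalar⟩ := hscalar
  obtain ⟨μ, hμ⟩ := Module.End.exists_eigenvalue A₀
  let W := Module.End.eigenspace A₀ μ
  have hW_ne_top : W ≠ ⊤ := fun h => by
    obtain ⟨x, hx⟩ := hA₀_nonscalar μ
    have hxW : x ∈ W := h ▸ Submodule.mem_top
    exact hx (Module.End.mem_eigenspace_iff.mp hxW)
  have hmaps : ∀ A ∈ S, Set.MapsTo A W W := fun A hA =>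
    Module.End.mapsTo_genEigenspace_of_comm (hS A₀ hA₀ A hA) μ 1
  have : Nontrivial W := Submodule.nontrivial_iff_ne_bot.mpr hμ
  obtain ⟨w, hw, hcommon⟩ := ih (finrank K W) (hV ▸ Submodule.finrank_lt hW_ne_top)
    {B | ∃ A, ∃ hA : A ∈ S, B = A.restrict (hmaps A hA)}
    (by
      rintro _ ⟨A, hA, rfl⟩ _ ⟨B, hB, rfl⟩
      ext x
      exact congrArg (· (x : V)) (hS A hA B hB).eq)
    rfl
  refine ⟨w, by simpa using hw, fun A hA => ?_⟩
  obtain ⟨ν, hν⟩ := hcommon _ ⟨A, hA, rfl⟩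
  exact ⟨ν, congrArg Subtype.val hν⟩

lemma Submodule.mapsTo_span_of_mapsTo {R M : Type*} [Semiring R] [AddCommMonoid M] [Module R M]
    {f : M →ₗ[R] M} {s : Set M} (h : Set.MapsTo f s (span R s)) :
    Set.MapsTo f (span R s) (span R s) := by
  simpa using Submodule.mapsTo_span h

namespace Representation

variable {k G V W : Type*} [CommSemiring k] [Monoid G] [AddCommMonoid V] [Module k V]
  [AddCommMonoid W] [Module k W]

def ofLinearEquiv (ρ : Representation k G V) (e : V ≃ₗ[k] W) : Representation k G W :=
  (e.conjAlgEquiv k).toAlgHom.toMonoidHom.comp ρ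

lemma ofLinearEquiv_apply (ρ : Representation k G V) (e : V ≃ₗ[k] W) (g : G) (w : W) :
    ρ.ofLinearEquiv e g w = e (ρ g (e.symm w)) := rfl

end Representation

lemma repEquiv_ofLinearEquiv {G V W : Type*} [Monoid G] [AddCommMonoid V] [Module ℂ V]
    [AddCommMonoid W] [Module ℂ W] (ρ : Representation ℂ G V) (e : V ≃ₗ[ℂ] W) :
    RepEquiv ρ (ρ.ofLinearEquiv e) :=
  ⟨e, fun g v => by rw [Representation.ofLinearEquiv_apply, e.symm_apply_apply]⟩

noncomputable def unitsChar (c : ℂ) (n : ℤ) (z : ℂˣ) : ℂ :=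
  ((‖(z : ℂ)‖ : ℂ)) ^ c * ((z : ℂ) / (‖(z : ℂ)‖ : ℂ)) ^ n

lemma chi_eq_unitsChar (s₁ s₂ : ℂ) (n : ℤ) : chi s₁ s₂ n = unitsChar (s₁ + s₂) n := rfl

lemma unitsChar_eq_exp (c : ℂ) (n : ℤ) (z : ℂˣ) :
    unitsChar c n z = exp (c * Real.log ‖(z : ℂ)‖) * exp (n * (arg z * I)) := by
  have hz : 0 < ‖(z : ℂ)‖ := norm_pos_iff.mpr z.ne_zero
  have hphase : (z : ℂ) / (‖(z : ℂ)‖ : ℂ) = exp (arg z * I) := by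
    rw [div_eq_iff (ofReal_ne_zero.mpr hz.ne'), mul_comm, norm_mul_exp_arg_mul_I]
  rw [unitsChar, cpow_def_of_ne_zero (ofReal_ne_zero.mpr hz.ne'), ← ofReal_log hz.le, hphase,
    exp_int_mul, mul_comm _ c]

lemma exists_eq_unitsChar (χ : ℂˣ →* ℂ) (hχ : Continuous χ) :
    ∃ (c : ℂ) (n : ℤ), ∀ z, χ z = unitsChar c n z := by
  let e : ℂ → ℂˣ := fun w => Units.mk0 (exp w) (exp_ne_zero w)
  have he_add : ∀ w w', e (w + w') = e w * e w' := fun w w' => Units.ext (exp_add w w')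
  have he_cont : Continuous e := Units.isEmbedding_val₀.continuous_iff.mpr continuous_exp
  have he_zero : e 0 = 1 := Units.ext exp_zero
  obtain ⟨c, hc⟩ := exists_eq_exp_mul_of_map_add (f := fun t : ℝ => χ (e t))
    (hχ.comp (he_cont.comp continuous_ofReal)) (by simp [he_zero])
    (fun x y => by simp only [ofReal_add, he_add, map_mul])
  obtain ⟨b, hb⟩ := exists_eq_exp_mul_of_map_add (f := fun t : ℝ => χ (e (t * I)))
    (hχ.comp (he_cont.comp (continuous_ofReal.mul continuous_const))) (by simp [he_zero])
    (fun x y => by simp only [ofReal_add, add_mul, he_add, map_mul])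
  obtain ⟨n, hn⟩ : ∃ n : ℤ, b = n * I := by
    have h2pi : e ((2 * Real.pi : ℝ) * I) = 1 := Units.ext (by
      simp only [e, Units.val_mk0, Units.val_one]; push_cast; exact exp_two_pi_mul_I)
    have h := hb (2 * Real.pi)
    rw [h2pi, map_one] at h
    obtain ⟨n, hn⟩ := exp_eq_one_iff.mp h.symm
    refine ⟨n, mul_right_cancel₀ (ofReal_ne_zero.mpr Real.two_pi_pos.ne') ?_⟩
    push_cast at hn ⊢
    linear_combination hn
  refine ⟨c, n, fun z => ?_⟩
  have hz : z = e (Real.log ‖(z : ℂ)‖) * e (arg z * I) := by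
    rw [← he_add, ← log_re, ← log_im, re_add_im]
    exact Units.ext (exp_log z.ne_zero).symm
  conv_lhs => rw [hz]
  rw [map_mul, hc, hb, hn, unitsChar_eq_exp]
  ring_nf

lemma norm_div_norm_eq_one (z : ℂˣ) : ‖(z : ℂ) / (‖(z : ℂ)‖ : ℂ)‖ = 1 := by
  have hz : 0 < ‖(z : ℂ)‖ := norm_pos_iff.mpr z.ne_zero
  rw [norm_div, norm_real, Real.norm_of_nonneg hz.le, div_self hz.ne']

lemma norm_unitsChar (c : ℂ) (n : ℤ) (z : ℂˣ) : ‖unitsChar c n z‖ = ‖(z : ℂ)‖ ^ c.re := by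
  rw [unitsChar, norm_mul, norm_cpow_eq_rpow_re_of_pos (norm_pos_iff.mpr z.ne_zero), norm_zpow,
    norm_div_norm_eq_one, one_zpow, mul_one]

lemma unitsChar_conjU (c : ℂ) (n : ℤ) (z : ℂˣ) :
    unitsChar c n (conjU z) = unitsChar c (-n) z := by
  have hconj : (conjU z : ℂ) = conj (z : ℂ) := rfl
  rw [unitsChar, unitsChar, hconj, norm_conj, zpow_neg, ← inv_zpow,
    inv_eq_conj (norm_div_norm_eq_one z), map_div₀, conj_ofReal]

lemma unitsChar_neg_one (c : ℂ) (n : ℤ) : unitsChar c n (-1) = (-1) ^ n := by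
  simp [unitsChar]

lemma unitsChar_of_norm_eq_one (c : ℂ) (n : ℤ) {z : ℂˣ} (hz : ‖(z : ℂ)‖ = 1) :
    unitsChar c n z = (z : ℂ) ^ n := by
  simp [unitsChar, hz]

/-- At `z = exp (π i / 2n)` the two sides are `i` and `-i`. -/
lemma eq_zero_of_forall_unitsChar_neg_eq (c : ℂ) (n : ℤ)
    (h : ∀ z, unitsChar c (-n) z = unitsChar c n z) : n = 0 := by
  by_contra hn
  let z : ℂˣ := Units.mk0 (exp ((Real.pi / (2 * n) : ℝ) * I)) (exp_ne_zero _)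
  have hzn : (z : ℂ) ^ n = I := by
    rw [Units.val_mk0, ← exp_int_mul]
    convert exp_pi_div_two_mul_I using 2
    push_cast
    field_simp
  have := h z
  rw [unitsChar_of_norm_eq_one _ _ (norm_exp_ofReal_mul_I _),
    unitsChar_of_norm_eq_one _ _ (norm_exp_ofReal_mul_I _), zpow_neg, hzn, inv_I] at this
  exact I_ne_zero (by linear_combination -this / 2)

namespace WeilR

def incl : ℂˣ →* WeilR where
  toFun z := ⟨z, false⟩
  map_one' := rfl
  map_mul' z w := by simp [mul_def]

def J : WeilR := ⟨1, true⟩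

@[simp] lemma incl_z (z : ℂˣ) : (incl z).z = z := rfl

lemma mk_false (z : ℂˣ) : (⟨z, false⟩ : WeilR) = incl z := rfl

lemma mk_one_true : (⟨1, true⟩ : WeilR) = J := rfl

lemma incl_mul_J (z : ℂˣ) : incl z * J = ⟨z, true⟩ := by
  simp [incl, J, mul_def]

lemma J_mul_incl (z : ℂˣ) : J * incl z = incl (conjU z) * J := by
  simp [incl, J, mul_def]

lemma J_mul_J : J * J = incl (-1) := by
  simp [incl, J, mul_def]

lemma eq_incl_or_eq_incl_mul_J (g : WeilR) : g = incl g.z ∨ g = incl g.z * J := by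
  obtain ⟨z, _ | _⟩ := g
  · exact Or.inl rfl
  · exact Or.inr (incl_mul_J z).symm

lemma continuous_incl : Continuous incl :=
  continuous_induced_rng.mpr (continuous_id.prodMk continuous_const)

end WeilR

open WeilR

lemma wchar_incl (s : ℂ) (ε : Bool) (z : ℂˣ) :
    wchar s ε (incl z) = (((‖(z : ℂ)‖ ^ 2 : ℝ)) : ℂ) ^ s := by
  simp [wchar, incl]

lemma wchar_incl_mul_J (s : ℂ) (ε : Bool) (z : ℂˣ) :
    wchar s ε (incl z * J) = wchar s ε (incl z) * (if ε then -1 else 1) := by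
  rw [incl_mul_J]
  cases ε <;> simp [wchar, incl]

lemma wchar_half_incl (c : ℂ) (ε : Bool) (z : ℂˣ) :
    wchar (c / 2) ε (incl z) = unitsChar c 0 z := by
  have hz : 0 < ‖(z : ℂ)‖ := norm_pos_iff.mpr z.ne_zero
  rw [wchar_incl, unitsChar, zpow_zero, mul_one,
    cpow_def_of_ne_zero (ofReal_ne_zero.mpr (by positivity)),
    cpow_def_of_ne_zero (ofReal_ne_zero.mpr hz.ne'), ← ofReal_log (by positivity),
    ← ofReal_log hz.le, Real.log_pow]
  push_cast
  ring_nf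

lemma norm_wchar (s : ℂ) (ε : Bool) (g : WeilR) :
    ‖wchar s ε g‖ = (‖(g.z : ℂ)‖ ^ 2) ^ s.re := by
  have hz : 0 < ‖(g.z : ℂ)‖ ^ 2 := by positivity [norm_pos_iff.mpr g.z.ne_zero]
  rw [wchar, norm_mul, norm_cpow_eq_rpow_re_of_pos hz]
  cases ε <;> cases g.j <;> simp

section IrreducibleRep

variable {V : Type*} [AddCommGroup V] [Module ℂ V] {ρ : Representation ℂ WeilR V}
  {c : ℂ} {n : ℤ} {v : V}

lemma RepIrreducible.eq_top_of_mapsTo (hirr : RepIrreducible ρ) {U : Submodule ℂ V}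
    (hincl : ∀ z, Set.MapsTo (ρ (incl z)) U U) (hJ : Set.MapsTo (ρ J) U U)
    (hv : v ∈ U) (hv0 : v ≠ 0) : U = ⊤ := by
  refine (hirr U fun g x hx => ?_).resolve_left fun h => hv0 (by simpa [h] using hv)
  rcases eq_incl_or_eq_incl_mul_J g with hg | hg <;> rw [hg]
  · exact hincl _ hx
  · exact map_mul ρ _ _ ▸ hincl _ (hJ hx)

lemma incl_apply_J_apply (hv : ∀ z, ρ (incl z) v = unitsChar c n z • v) (z : ℂˣ) :
    ρ (incl z) (ρ J v) = unitsChar c (-n) z • ρ J v := by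
  have hcomm : incl z * J = J * incl (conjU z) := by rw [J_mul_incl, conjU_conjU]
  rw [← Module.End.mul_apply, ← map_mul, hcomm, map_mul, Module.End.mul_apply, hv, map_smul,
    unitsChar_conjU]

lemma J_apply_J_apply (hv : ∀ z, ρ (incl z) v = unitsChar c n z • v) :
    ρ J (ρ J v) = (-1 : ℂ) ^ n • v := by
  rw [← Module.End.mul_apply, ← map_mul, J_mul_J, hv, unitsChar_neg_one]

lemma J_apply_ne_zero (hv : ∀ z, ρ (incl z) v = unitsChar c n z • v) (hv0 : v ≠ 0) :
    ρ J v ≠ 0 := fun h => by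
  have := J_apply_J_apply hv
  rw [h, map_zero, eq_comm, smul_eq_zero] at this
  exact this.elim (zpow_ne_zero n (neg_ne_zero.mpr one_ne_zero)) hv0

lemma exists_eigenvector_unitsChar [FiniteDimensional ℂ V] [Nontrivial V] [TopologicalSpace V]
    [IsTopologicalAddGroup V] [ContinuousSMul ℂ V] [T2Space V]
    (hcont : ∀ v, Continuous fun z => ρ (incl z) v) :
    ∃ (v : V) (c : ℂ) (n : ℤ), v ≠ 0 ∧ ∀ z, ρ (incl z) v = unitsChar c n z • v := by
  obtain ⟨v, hv0, heigen⟩ := Module.End.exists_common_eigenvector (Set.range (ρ ∘ incl)) <| by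
    rintro _ ⟨z, rfl⟩ _ ⟨w, rfl⟩
    simp only [Function.comp_apply, Commute, SemiconjBy, ← map_mul, mul_comm z]
  choose χ hχ using fun z => heigen (ρ (incl z)) ⟨z, rfl⟩
  have hcancel := smul_left_injective ℂ hv0
  let χhom : ℂˣ →* ℂ :=
    { toFun := χ
      map_one' := hcancel <| by
        dsimp only
        rw [← hχ, map_one, map_one, Module.End.one_apply, one_smul]
      map_mul' := fun z w => hcancel <| by
        dsimp only
        rw [← hχ, map_mul, map_mul, Module.End.mul_apply, hχ, map_smul, hχ, smul_smul,
          mul_comm] }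
  have hχcont : Continuous χ := (isClosedEmbedding_smul_left hv0).continuous_iff.mpr <| by
    simpa only [Function.comp_def, ← hχ] using hcont v
  obtain ⟨c, n, hcn⟩ := exists_eq_unitsChar χhom hχcont
  exact ⟨v, c, n, hv0, fun z => (hχ z).trans (by rw [← hcn]; rfl)⟩

lemma exists_eigenvector_unitsChar_nonpos (hv : ∀ z, ρ (incl z) v = unitsChar c n z • v)
    (hv0 : v ≠ 0) :
    ∃ (v' : V) (m : ℤ), v' ≠ 0 ∧ m ≤ 0 ∧ ∀ z, ρ (incl z) v' = unitsChar c m z • v' := by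
  rcases le_or_gt n 0 with hn | hn
  · exact ⟨v, n, hv0, hn, hv⟩
  · exact ⟨ρ J v, -n, J_apply_ne_zero hv hv0, by omega, incl_apply_J_apply hv⟩

lemma span_singleton_eq_top_of_J_apply_mem (hirr : RepIrreducible ρ)
    (hv : ∀ z, ρ (incl z) v = unitsChar c n z • v) (hv0 : v ≠ 0)
    (hJv : ρ J v ∈ Submodule.span ℂ {v}) : Submodule.span ℂ {v} = ⊤ := by
  refine hirr.eq_top_of_mapsTo (fun z => Submodule.mapsTo_span_of_mapsTo ?_)
    (Submodule.mapsTo_span_of_mapsTo ?_) (Submodule.mem_span_singleton_self v) hv0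
  · rintro x rfl
    exact hv z ▸ Submodule.smul_mem _ _ (Submodule.mem_span_singleton_self x)
  · rintro x rfl
    exact hJv

lemma exists_wchar_of_J_apply_mem_span (hirr : RepIrreducible ρ)
    (hv : ∀ z, ρ (incl z) v = unitsChar c n z • v) (hv0 : v ≠ 0)
    (hJv : ρ J v ∈ Submodule.span ℂ {v}) :
    finrank ℂ V = 1 ∧ ∃ (s : ℂ) (ε : Bool), ∀ g u, ρ g u = wchar s ε g • u := by
  have htop := span_singleton_eq_top_of_J_apply_mem hirr hv hv0 hJv
  obtain ⟨a, ha⟩ := Submodule.mem_span_singleton.mp hJv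
  have hn : n = 0 := eq_zero_of_forall_unitsChar_neg_eq c n fun z =>
    smul_left_injective ℂ (J_apply_ne_zero hv hv0) <| by
      dsimp only
      rw [← incl_apply_J_apply hv z, ← ha, map_smul, hv, smul_comm]
  subst hn
  obtain ⟨ε, hε⟩ : ∃ ε : Bool, a = if ε then -1 else 1 := by
    have ha2 : (a * a) • v = (1 : ℂ) • v := by
      rw [mul_smul, ha, ← map_smul, ha, J_apply_J_apply hv, zpow_zero]
    rcases mul_self_eq_one_iff.mp (smul_left_injective ℂ hv0 ha2) with rfl | rfl
    exacts [⟨false, rfl⟩, ⟨true, rfl⟩]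
  have hchar : ∀ g, ρ g v = wchar (c / 2) ε g • v := fun g => by
    rcases eq_incl_or_eq_incl_mul_J g with hg | hg <;> rw [hg]
    · rw [hv, wchar_half_incl]
    · rw [wchar_incl_mul_J, map_mul, Module.End.mul_apply, ← ha, map_smul, hv, smul_smul,
        wchar_half_incl, ← hε, mul_comm]
  refine ⟨by rw [← finrank_top, ← htop, finrank_span_singleton hv0], c / 2, ε, fun g u => ?_⟩
  obtain ⟨t, rfl⟩ := Submodule.mem_span_singleton.mp (htop ▸ Submodule.mem_top : u ∈ _)
  rw [map_smul, hchar, smul_comm]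

lemma span_pair_eq_top (hirr : RepIrreducible ρ) (hv : ∀ z, ρ (incl z) v = unitsChar c n z • v)
    (hv0 : v ≠ 0) : Submodule.span ℂ (Set.range ![v, ρ J v]) = ⊤ := by
  have hmem : ∀ i, ![v, ρ J v] i ∈ Submodule.span ℂ (Set.range ![v, ρ J v]) := fun i =>
    Submodule.subset_span (Set.mem_range_self i)
  refine hirr.eq_top_of_mapsTo (fun z => Submodule.mapsTo_span_of_mapsTo ?_)
    (Submodule.mapsTo_span_of_mapsTo ?_) (hmem 0) hv0 <;> rintro _ ⟨i, rfl⟩ <;> fin_cases i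
  · exact (hv z).symm ▸ Submodule.smul_mem _ _ (hmem 0)
  · exact (incl_apply_J_apply hv z).symm ▸ Submodule.smul_mem _ _ (hmem 1)
  · exact hmem 1
  · exact (J_apply_J_apply hv).symm ▸ Submodule.smul_mem _ _ (hmem 0)

/-- For `n = 0` the line through `v + j v` would be invariant. -/
lemma ne_zero_of_linearIndependent (hirr : RepIrreducible ρ)
    (hv : ∀ z, ρ (incl z) v = unitsChar c n z • v)
    (hli : LinearIndependent ℂ ![v, ρ J v]) : n ≠ 0 := by
  rintro rfl
  have hsum0 : v + ρ J v ≠ 0 := by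
    simpa using LinearIndependent.pair_iff.mp hli 1 1
  have htop : Submodule.span ℂ {v + ρ J v} = ⊤ := by
    refine hirr.eq_top_of_mapsTo (fun z => Submodule.mapsTo_span_of_mapsTo ?_)
      (Submodule.mapsTo_span_of_mapsTo ?_) (Submodule.mem_span_singleton_self _) hsum0 <;>
      rintro _ rfl
    · rw [map_add, hv, incl_apply_J_apply hv, neg_zero, ← smul_add]
      exact Submodule.smul_mem _ _ (Submodule.mem_span_singleton_self _)
    · rw [map_add, J_apply_J_apply hv, zpow_zero, one_smul, add_comm]
      exact Submodule.mem_span_singleton_self _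
  obtain ⟨t, ht⟩ := Submodule.mem_span_singleton.mp (htop ▸ Submodule.mem_top : v ∈ _)
  have := LinearIndependent.pair_iff.mp hli (t - 1) t (by linear_combination (norm := module) ht)
  exact one_ne_zero (by linear_combination this.2 - this.1)

lemma isIndRep_ofLinearEquiv_basis {s₁ s₂ : ℂ} (b : Basis (Fin 2) ℂ V) (hb : ⇑b = ![v, ρ J v])
    (hv : ∀ z, ρ (incl z) v = unitsChar (s₁ + s₂) n z • v) :
    IsIndRep s₁ s₂ n (ρ.ofLinearEquiv b.equivFun) := by
  have hsymm : ∀ x, b.equivFun.symm x = x 0 • v + x 1 • ρ J v := fun x => by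
    simp [Basis.equivFun_symm_apply, Fin.sum_univ_two, hb]
  constructor
  · intro z u
    apply b.equivFun.symm.injective
    rw [mk_false, Representation.ofLinearEquiv_apply, LinearEquiv.symm_apply_apply, hsymm, hsymm,
      map_add, map_smul, map_smul, hv, incl_apply_J_apply hv, chi_eq_unitsChar, chi_eq_unitsChar,
      add_comm s₂]
    simp only [Matrix.cons_val_zero, Matrix.cons_val_one, smul_smul, mul_comm]
  · intro u
    apply b.equivFun.symm.injective
    rw [mk_one_true, Representation.ofLinearEquiv_apply, LinearEquiv.symm_apply_apply, hsymm,
      hsymm, map_add, map_smul, map_smul, J_apply_J_apply hv]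
    simp only [Matrix.cons_val_zero, Matrix.cons_val_one, smul_smul, mul_comm]
    abel

lemma exists_isIndRep_of_J_apply_not_mem_span (hirr : RepIrreducible ρ)
    (hv : ∀ z, ρ (incl z) v = unitsChar c n z • v) (hv0 : v ≠ 0) (hn : n ≤ 0)
    (hJv : ρ J v ∉ Submodule.span ℂ {v}) :
    finrank ℂ V = 2 ∧ ∃ (s₁ s₂ : ℂ), (n : ℂ) = s₁ - s₂ ∧ n < 0 ∧
      ∃ ρ' : Representation ℂ WeilR (Fin 2 → ℂ), IsIndRep s₁ s₂ n ρ' ∧ RepEquiv ρ ρ' := by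
  have hli : LinearIndependent ℂ ![v, ρ J v] := (LinearIndependent.pair_iff' hv0).mpr
    fun a ha => hJv (Submodule.mem_span_singleton.mpr ⟨a, ha⟩)
  let b := Basis.mk hli (span_pair_eq_top hirr hv hv0).ge
  have hv' : ∀ z, ρ (incl z) v = unitsChar ((c + n) / 2 + (c - n) / 2) n z • v := by
    rwa [show (c + n) / 2 + (c - n) / 2 = c by ring]
  exact ⟨by rw [finrank_eq_card_basis b, Fintype.card_fin], (c + n) / 2, (c - n) / 2, by ring,
    lt_of_le_of_ne hn (ne_zero_of_linearIndependent hirr hv hli), _,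
    isIndRep_ofLinearEquiv_basis b (Basis.coe_mk _ _) hv', repEquiv_ofLinearEquiv _ _⟩

end IrreducibleRep

section Unitarity

variable {d : ℕ} {ρ : Representation ℂ WeilR (Fin d → ℂ)}

lemma isUnitarizable_iff_exists_norm :
    IsUnitarizable ρ ↔ ∃ T : (Fin d → ℂ) ≃ₗ[ℂ] EuclideanSpace ℂ (Fin d),
      ∀ g v, ‖T (ρ g v)‖ = ‖T v‖ := by
  refine ⟨fun ⟨T, hT⟩ => ⟨T, fun g v => ?_⟩, fun ⟨T, hT⟩ => ⟨T, fun g v w => ?_⟩⟩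
  · have h := hT g v v
    rw [inner_self_eq_norm_sq_to_K, inner_self_eq_norm_sq_to_K] at h
    exact (sq_eq_sq₀ (norm_nonneg _) (norm_nonneg _)).mp (mod_cast h)
  · let f : EuclideanSpace ℂ (Fin d) →ₗᵢ[ℂ] EuclideanSpace ℂ (Fin d) :=
      ⟨T.toLinearMap ∘ₗ ρ g ∘ₗ T.symm.toLinearMap, fun x => by simpa using hT g (T.symm x)⟩
    simpa [f] using f.inner_map_map (T v) (T w)

lemma IsUnitarizable.norm_eq_one (h : IsUnitarizable ρ) {g : WeilR} {v : Fin d → ℂ} {μ : ℂ}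
    (hv0 : v ≠ 0) (hv : ρ g v = μ • v) : ‖μ‖ = 1 := by
  obtain ⟨T, hT⟩ := isUnitarizable_iff_exists_norm.mp h
  have h := hT g v
  rw [hv, map_smul, norm_smul] at h
  exact (mul_eq_right₀ (norm_ne_zero_iff.mpr ((map_ne_zero_iff T T.injective).mpr hv0))).mp h

lemma isUnitarizable_of_incl_of_J (T : (Fin d → ℂ) ≃ₗ[ℂ] EuclideanSpace ℂ (Fin d))
    (hincl : ∀ z v, ‖T (ρ (incl z) v)‖ = ‖T v‖) (hJ : ∀ v, ‖T (ρ J v)‖ = ‖T v‖) :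
    IsUnitarizable ρ := by
  refine isUnitarizable_iff_exists_norm.mpr ⟨T, fun g v => ?_⟩
  rcases eq_incl_or_eq_incl_mul_J g with hg | hg <;> rw [hg]
  · exact hincl _ v
  · rw [map_mul, Module.End.mul_apply, hincl, hJ]

lemma isUnitarizable_iff_of_wchar [NeZero d] {s : ℂ} {ε : Bool}
    (hρ : ∀ g v, ρ g v = wchar s ε g • v) : IsUnitarizable ρ ↔ s.re = 0 := by
  refine ⟨fun h => ?_, fun hs => isUnitarizable_iff_exists_norm.mpr
    ⟨(WithLp.linearEquiv 2 ℂ _).symm, fun g v => ?_⟩⟩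
  · have h1 := h.norm_eq_one (fun h0 => one_ne_zero (congrFun h0 0))
      (hρ (incl (Units.mk0 2 two_ne_zero)) fun _ => 1)
    rw [norm_wchar] at h1
    exact (Real.rpow_right_inj (by simp) (by norm_num)).mp (h1.trans (Real.rpow_zero _).symm)
  · rw [hρ, map_smul, norm_smul, norm_wchar, hs, Real.rpow_zero, one_mul]

lemma norm_withLp_symm_fin_two (x : Fin 2 → ℂ) :
    ‖(WithLp.linearEquiv 2 ℂ (Fin 2 → ℂ)).symm x‖ = √(‖x 0‖ ^ 2 + ‖x 1‖ ^ 2) := by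
  simp [EuclideanSpace.norm_eq, Fin.sum_univ_two]

lemma isUnitarizable_iff_of_isIndRep {s₁ s₂ : ℂ} {n : ℤ}
    {ρ : Representation ℂ WeilR (Fin 2 → ℂ)} (hρ : IsIndRep s₁ s₂ n ρ) :
    IsUnitarizable ρ ↔ (s₁ + s₂).re = 0 := by
  refine ⟨fun h => ?_, fun hs => isUnitarizable_of_incl_of_J (WithLp.linearEquiv 2 ℂ _).symm
    (fun z u => ?_) (fun u => ?_)⟩
  · have h1 := h.norm_eq_one (v := ![1, 0]) (by simp) (g := incl (Units.mk0 2 two_ne_zero))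
      (μ := chi s₁ s₂ n (Units.mk0 2 two_ne_zero)) (by rw [← mk_false, hρ.1]; simp)
    rw [chi_eq_unitsChar, norm_unitsChar] at h1
    exact (Real.rpow_right_inj (by simp) (by norm_num)).mp (h1.trans (Real.rpow_zero _).symm)
  · rw [← mk_false, hρ.1, norm_withLp_symm_fin_two, norm_withLp_symm_fin_two]
    simp [chi_eq_unitsChar, norm_unitsChar, add_comm s₂, hs]
  · rw [← mk_one_true, hρ.2, norm_withLp_symm_fin_two, norm_withLp_symm_fin_two]
    simp [add_comm]

end Unitarity

/-- Every irreducible finite-dimensional continuous complex representation of `W_ℝ` has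
dimension 1 or 2; up to equivalence it is either a character `W(s,ε)` (`s ∈ ℂ`,
`ε ∈ {0,1}`) or an induced representation `V(s₁,s₂)` with `s₂ − s₁` a positive integer
(i.e. `n = s₁ − s₂ < 0`).  Moreover `W(s,ε)` is unitary iff `s ∈ iℝ`, and `V(s₁,s₂)`
is unitary iff `s₁ + s₂ ∈ iℝ`. -/
theorem irreducible_rep_weilR_classification (d : ℕ)
    (ρ : Representation ℂ WeilR (Fin d → ℂ))
    (hcont : Continuous fun p : WeilR × (Fin d → ℂ) => ρ p.1 p.2)
    (hirr : RepIrreducible ρ) (hd : 0 < d) :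
    (d = 1 ∨ d = 2) ∧
    ((∃ (s : ℂ) (ε : Bool), ∀ (g : WeilR) (v : Fin d → ℂ), ρ g v = wchar s ε g • v) ∨
      (∃ (s₁ s₂ : ℂ) (n : ℤ), (n : ℂ) = s₁ - s₂ ∧ n < 0 ∧
        ∃ ρ' : Representation ℂ WeilR (Fin 2 → ℂ),
          IsIndRep s₁ s₂ n ρ' ∧ RepEquiv ρ ρ')) ∧
    (∀ (s : ℂ) (ε : Bool) (ρ₁ : Representation ℂ WeilR (Fin 1 → ℂ)),
      (∀ (g : WeilR) (v : Fin 1 → ℂ), ρ₁ g v = wchar s ε g • v) →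
      (IsUnitarizable ρ₁ ↔ s.re = 0)) ∧
    (∀ (s₁ s₂ : ℂ) (n : ℤ), (n : ℂ) = s₁ - s₂ → n < 0 →
      ∀ ρ' : Representation ℂ WeilR (Fin 2 → ℂ), IsIndRep s₁ s₂ n ρ' →
        (IsUnitarizable ρ' ↔ (s₁ + s₂).re = 0)) := by
  have : Nonempty (Fin d) := ⟨⟨0, hd⟩⟩
  obtain ⟨v, c, n, hv0, hv⟩ := exists_eigenvector_unitsChar fun v =>
    hcont.comp (continuous_incl.prodMk continuous_const)
  obtain ⟨v, n, hv0, hn, hv⟩ := exists_eigenvector_unitsChar_nonpos hv hv0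
  rw [← and_assoc]
  refine ⟨?_, fun s ε ρ₁ hρ₁ => isUnitarizable_iff_of_wchar hρ₁,
    fun s₁ s₂ n _ _ ρ' hρ' => isUnitarizable_iff_of_isIndRep hρ'⟩
  by_cases hJv : ρ J v ∈ Submodule.span ℂ {v}
  · obtain ⟨hd1, hchar⟩ := exists_wchar_of_J_apply_mem_span hirr hv hv0 hJv
    exact ⟨Or.inl (by simpa using hd1), Or.inl hchar⟩
  · obtain ⟨hd2, s₁, s₂, hs, hneg, hind⟩ :=
      exists_isIndRep_of_J_apply_not_mem_span hirr hv hv0 hn hJv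
    exact ⟨Or.inr (by simpa using hd2), Or.inr ⟨s₁, s₂, n, hs, hneg, hind⟩⟩
end
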